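/- Let Γ = {y ∈ ℝ² : y₂ ≥ |y₁|} and F : ℝ → ℝ², F(x) = (x, −x²), x̄ = 0. Then: (i) GMFCQ fails at x̄, i.e., there exists a nonzero λ ∈ N_Γ(F(x̄)) with ∇F(x̄)ᵀλ = 0 (namely λ = (0,−1)); (ii) MSCQ holds at x̄, i.e., there exist κ > 0 and a neighborhood U of 0 with d_{F^{-1}(Γ)}(x) ≤ κ d_Γ(F(x)) for all x ∈ U. -/

import Mathlib

open Set Filter Topology Metric

noncomputable section

/-- Normal cone of convex analysis: `N_P(y) = {z* | ⟨z*, v - y⟩ ≤ 0 ∀ v ∈ P}`. -/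
def convNormal {E : Type*} [NormedAddCommGroup E] [InnerProductSpace ℝ E]
    (P : Set E) (y : E) : Set E :=
  {v | ∀ p ∈ P, (inner ℝ v (p - y) : ℝ) ≤ 0}

/-- The vector `(a, b)` in the Euclidean plane. -/
def v2 (a b : ℝ) : EuclideanSpace ℝ (Fin 2) :=
  (WithLp.equiv 2 (Fin 2 → ℝ)).symm ![a, b]

/-- `Γ = {y ∈ ℝ² : y₂ ≥ |y₁|}`. -/
def Gamma17 : Set (EuclideanSpace ℝ (Fin 2)) :=
  {y | |y 0| ≤ y 1}

/-- `F(x) = (x, −x²)`. -/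
def F17 (x : ℝ) : EuclideanSpace ℝ (Fin 2) := v2 x (-(x ^ 2))

lemma v2_apply0 (a b : ℝ) : v2 a b 0 = a := rfl
lemma v2_apply1 (a b : ℝ) : v2 a b 1 = b := rfl

lemma abs_apply_le_dist (a b : EuclideanSpace ℝ (Fin 2)) (i : Fin 2) :
    |a i - b i| ≤ dist a b := by
  have := EuclideanSpace.dist_eq a b
  rw [this]
  have h1 : |a i - b i| = Real.sqrt ((a i - b i) ^ 2) := by
    rw [Real.sqrt_sq_eq_abs]
  rw [h1]
  apply Real.sqrt_le_sqrt
  exact Finset.single_le_sum (f := fun j => dist (a j) (b j) ^ 2)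
    (fun j _ => sq_nonneg _) (Finset.mem_univ i) |>.trans_eq' (by
      rw [Real.dist_eq, sq_abs])

/-- (i) GMFCQ fails at `x̄ = 0` (witnessed by `λ = (0,−1)`, since `∇F(0) = (1,0)ᵀ`);
(ii) MSCQ holds at `x̄ = 0`. -/
theorem stmt17 :
    (∃ lam : EuclideanSpace ℝ (Fin 2), lam ≠ 0 ∧
        lam ∈ convNormal Gamma17 (F17 0) ∧
        (inner ℝ lam (v2 1 0) : ℝ) = 0 ∧ lam = v2 0 (-1)) ∧
    (∃ κ > (0 : ℝ), ∃ U ∈ 𝓝 (0 : ℝ), ∀ x ∈ U,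
        Metric.infDist x (F17 ⁻¹' Gamma17) ≤ κ * Metric.infDist (F17 x) Gamma17) := by
  constructor
  · refine ⟨v2 0 (-1), ?_, ?_, ?_, rfl⟩
    · intro h
      have : (v2 0 (-1)) 1 = (0 : EuclideanSpace ℝ (Fin 2)) 1 := by rw [h]
      simp [v2_apply1] at this
    · intro p hp
      have hp' : |p 0| ≤ p 1 := hp
      have h0 : (0 : ℝ) ≤ p 1 := (abs_nonneg _).trans hp'
      have : (inner ℝ (v2 0 (-1)) (p - F17 0) : ℝ) = -(p 1) := by
        simp [PiLp.inner_apply, Fin.sum_univ_two, v2_apply0, v2_apply1, F17]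
      rw [this]; linarith
    · simp [PiLp.inner_apply, Fin.sum_univ_two, v2_apply0, v2_apply1]
  · refine ⟨2, by norm_num, Set.univ, univ_mem, fun x _ => ?_⟩
    have hΓne : Gamma17.Nonempty := ⟨v2 0 0, by simp [Gamma17, v2_apply0, v2_apply1]⟩
    have h0mem : (0 : ℝ) ∈ F17 ⁻¹' Gamma17 := by
      simp [Gamma17, F17, v2_apply0, v2_apply1, Set.mem_preimage]
    have h1 : Metric.infDist x (F17 ⁻¹' Gamma17) ≤ |x| := by
      have := Metric.infDist_le_dist_of_mem h0mem (x := x)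
      simpa [Real.dist_eq] using this
    have h2 : |x| / 2 ≤ Metric.infDist (F17 x) Gamma17 := by
      refine le_of_not_gt fun hlt => ?_
      obtain ⟨p, hp, hd⟩ := (Metric.infDist_lt_iff hΓne).1 hlt
      have hp' : |p 0| ≤ p 1 := hp
      have d0 : |x - p 0| ≤ dist (F17 x) p := by
        simpa [F17, v2_apply0] using abs_apply_le_dist (F17 x) p 0
      have d1 : |(-(x ^ 2)) - p 1| ≤ dist (F17 x) p := by
        simpa [F17, v2_apply1] using abs_apply_le_dist (F17 x) p 1
      have hb : p 1 ≤ |(-(x ^ 2)) - p 1| := by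
        have hx2 : (0:ℝ) ≤ x ^ 2 := sq_nonneg x
        rw [abs_sub_comm]
        calc p 1 ≤ p 1 + x ^ 2 := by linarith
          _ ≤ |p 1 + x ^ 2| := le_abs_self _
          _ = |p 1 - (-(x ^ 2))| := by ring_nf
      have : |x| ≤ |x - p 0| + |p 0| := by
        calc |x| = |(x - p 0) + p 0| := by ring_nf
          _ ≤ |x - p 0| + |p 0| := abs_add_le _ _
      linarith
    calc Metric.infDist x (F17 ⁻¹' Gamma17) ≤ |x| := h1
      _ ≤ 2 * Metric.infDist (F17 x) Gamma17 := by linarith
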